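/- Let K₁, …, K_s be convex cones in ℝᵈ with a common vertex a. If the family {K₁, …, K_s} is not separable, then ⋂_{i=1}^{s} relint K_i ≠ ∅. -/

import Mathlib

open scoped RealInnerProductSpace
open Asymptotics Topology

noncomputable section

abbrev Euc (d : ℕ) : Type := EuclideanSpace ℝ (Fin d)

/-- `K` is a convex cone with vertex `a`. -/
def IsConvexCone {E : Type*} [NormedAddCommGroup E] [InnerProductSpace ℝ E]
    (a : E) (K : Set E) : Prop :=
  a ∈ K ∧ (∀ x ∈ K, ∀ α : ℝ, 0 ≤ α → a + α • (x - a) ∈ K) ∧ Convex ℝ K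

/-- The polar (dual) cone of a cone `K` with vertex `a`. -/
def polarCone {E : Type*} [NormedAddCommGroup E] [InnerProductSpace ℝ E]
    (a : E) (K : Set E) : Set E :=
  {y | ∀ x ∈ K, ⟪y, x - a⟫ ≤ 0}

/-- `Q` is a tent of `Ω` at `a`. -/
def IsTent {E : Type*} [NormedAddCommGroup E] [InnerProductSpace ℝ E]
    (Ω : Set E) (a : E) (Q : Set E) : Prop :=
  IsConvexCone a Q ∧
  ∃ ψ : E → E, (fun x => ψ x - x) =o[𝓝 a] (fun x => x - a) ∧
    ∃ ε : ℝ, 0 < ε ∧ ∀ x ∈ Q, ‖x - a‖ < ε → ψ x ∈ Ω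

/-- `Q` is a local tent of `Ω` at `a`. -/
def IsLocalTent {E : Type*} [NormedAddCommGroup E] [InnerProductSpace ℝ E]
    (Ω : Set E) (a : E) (Q : Set E) : Prop :=
  IsConvexCone a Q ∧
  ∀ x ∈ intrinsicInterior ℝ Q, ∃ Q' : Set E, Q' ⊆ Q ∧ IsTent Ω a Q' ∧
    x ∈ intrinsicInterior ℝ Q' ∧ affineSpan ℝ Q' = affineSpan ℝ Q

/-- A family of convex cones with common vertex `a` is separable. -/
def SeparableFam {E : Type*} [NormedAddCommGroup E] [InnerProductSpace ℝ E]
    {ι : Type*} (a : E) (K : ι → Set E) : Prop :=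
  ∃ (i : ι) (c : E), c ≠ 0 ∧ (∀ x ∈ K i, ⟪c, x - a⟫ ≤ 0) ∧
    ∀ x : E, (∀ j, j ≠ i → x ∈ K j) → 0 ≤ ⟪c, x - a⟫

section Aux

open Set Metric Filter Pointwise

variable {E : Type*} [NormedAddCommGroup E] [NormedSpace ℝ E]

lemma mem_intrinsicInterior_iff' {s : Set E} {z : E} :
    z ∈ intrinsicInterior ℝ s ↔
      z ∈ affineSpan ℝ s ∧ ∃ ε > (0:ℝ), ∀ u, u ∈ affineSpan ℝ s → dist u z < ε → u ∈ s := by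
  rw [mem_intrinsicInterior]
  constructor
  · rintro ⟨y, hy, rfl⟩
    refine ⟨y.2, ?_⟩
    rw [mem_interior_iff_mem_nhds, Metric.mem_nhds_iff] at hy
    obtain ⟨ε, hε, hball⟩ := hy
    refine ⟨ε, hε, fun u hu hdu => ?_⟩
    have : (⟨u, hu⟩ : affineSpan ℝ s) ∈ Metric.ball y ε := by
      simpa [Metric.mem_ball, Subtype.dist_eq] using hdu
    exact hball this
  · rintro ⟨hz, ε, hε, h⟩
    refine ⟨⟨z, hz⟩, ?_, rfl⟩
    rw [mem_interior_iff_mem_nhds, Metric.mem_nhds_iff]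
    refine ⟨ε, hε, fun u hu => ?_⟩
    exact h u.1 u.2 (by simpa [Metric.mem_ball, Subtype.dist_eq] using hu)

lemma combo_mem_intrinsicInterior {s : Set E} (hconv : Convex ℝ s) {x y : E}
    (hx : x ∈ intrinsicInterior ℝ s) (hy : y ∈ s) {t : ℝ} (ht0 : 0 < t) (ht1 : t ≤ 1) :
    t • x + (1 - t) • y ∈ intrinsicInterior ℝ s := by
  rw [mem_intrinsicInterior_iff'] at hx ⊢
  obtain ⟨hxA, ε, hε, hball⟩ := hx
  have hyA : y ∈ affineSpan ℝ s := subset_affineSpan ℝ s hy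
  have hzA : t • x + (1 - t) • y ∈ affineSpan ℝ s := by
    have := AffineSubspace.smul_vsub_vadd_mem (affineSpan ℝ s) t hxA hyA hyA
    have he : t • (x -ᵥ y) +ᵥ y = t • x + (1 - t) • y := by
      simp [vsub_eq_sub, vadd_eq_add, smul_sub, sub_smul]; abel
    rwa [he] at this
  refine ⟨hzA, t * ε, by positivity, fun u hu hdu => ?_⟩
  set z := t • x + (1 - t) • y with hz
  set w := t⁻¹ • (u -ᵥ z) +ᵥ x with hw
  have hwA : w ∈ affineSpan ℝ s := AffineSubspace.smul_vsub_vadd_mem _ t⁻¹ hu hzA hxA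
  have hdw : dist w x < ε := by
    rw [dist_eq_norm]
    have : w - x = t⁻¹ • (u - z) := by simp [hw, vsub_eq_sub, vadd_eq_add]
    rw [this, norm_smul, norm_inv, Real.norm_of_nonneg ht0.le]
    rw [dist_eq_norm] at hdu
    calc t⁻¹ * ‖u - z‖ < t⁻¹ * (t * ε) := by
          exact mul_lt_mul_of_pos_left hdu (by positivity)
      _ = ε := by field_simp
  have hws : w ∈ s := hball w hwA hdw
  have hcomb : u = t • w + (1 - t) • y := by
    simp only [hw, vsub_eq_sub, vadd_eq_add, smul_add, smul_smul,
      mul_inv_cancel₀ ht0.ne', one_smul, hz]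
    module
  rw [hcomb]
  exact hconv hws hy ht0.le (by linarith) (by ring)


lemma convex_intrinsicInterior' {s : Set E} (hconv : Convex ℝ s) :
    Convex ℝ (intrinsicInterior ℝ s) := by
  intro x hx y hy p q hp hq hpq
  rcases eq_or_lt_of_le hp with hp0 | hp0
  · have hq1 : q = 1 := by linarith
    simpa [← hp0, hq1] using hy
  · have : p • x + (1 - p) • y ∈ intrinsicInterior ℝ s :=
      combo_mem_intrinsicInterior hconv hx (intrinsicInterior_subset hy) hp0 (by linarith)
    simpa [show (1:ℝ) - p = q by linarith] using this

lemma mem_closure_of_segment {S : Set E} {z x : E}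
    (h : ∀ t ∈ Set.Ioc (0:ℝ) 1, t • z + (1 - t) • x ∈ S) : x ∈ closure S := by
  have hcont : Filter.Tendsto (fun t : ℝ => t • z + (1 - t) • x) (𝓝[>] 0) (𝓝 x) := by
    have hc : Continuous fun t : ℝ => t • z + (1 - t) • x :=
      (continuous_id.smul continuous_const).add
        ((continuous_const.sub continuous_id).smul continuous_const)
    have := (hc.tendsto 0).mono_left (nhdsWithin_le_nhds (s := Set.Ioi (0:ℝ)))
    simpa using this
  refine mem_closure_of_tendsto hcont ?_
  filter_upwards [Ioc_mem_nhdsGT_of_mem (by simp : (0:ℝ) ∈ Set.Ico (0:ℝ) 1)] with t ht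
  exact h t ht

lemma separate_disjoint_convex {d : ℕ} {C D : Set (Euc d)} (hC : Convex ℝ C) (hD : Convex ℝ D)
    (hCne : C.Nonempty) (hDne : D.Nonempty) (hdisj : ∀ x, x ∈ C → x ∉ D) :
    ∃ c : Euc d, c ≠ 0 ∧ ∀ x ∈ C, ∀ y ∈ D, ⟪c, x⟫ ≤ ⟪c, y⟫ := by
  obtain ⟨x₀, hx₀⟩ := hCne
  obtain ⟨y₀, hy₀⟩ := hDne
  haveI : Nontrivial (Euc d) := nontrivial_of_ne x₀ y₀ (fun h => hdisj x₀ hx₀ (h ▸ hy₀))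
  set S : Set (Euc d) := D - C with hS
  have hSconv : Convex ℝ S := hD.sub hC
  have h0S : (0 : Euc d) ∉ S := by
    rintro ⟨y, hy, x, hx, hxy⟩
    have : y = x := sub_eq_zero.mp hxy
    exact hdisj x hx (this ▸ hy)
  have hsph : IsCompact (Metric.sphere (0 : Euc d) 1) := isCompact_sphere 0 1
  set Z : S → Set (Euc d) := fun u => {c | 0 ≤ ⟪c, (u : Euc d)⟫} with hZ
  have hZc : ∀ u, IsClosed (Z u) := fun u =>
    isClosed_le continuous_const (continuous_id.inner continuous_const)
  have hfin : ∀ u : Finset S, (Metric.sphere (0 : Euc d) 1 ∩ ⋂ i ∈ u, Z i).Nonempty := by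
    intro u
    rcases u.eq_empty_or_nonempty with rfl | ⟨i₀, hi₀⟩
    · obtain ⟨c, hc⟩ := NormedSpace.sphere_nonempty (x := (0 : Euc d)).mpr zero_le_one
      exact ⟨c, hc, by simp⟩
    · set P : Set (Euc d) := Subtype.val '' (u : Set S) with hP
      set T := convexHull ℝ P with hT
      have hPfin : P.Finite := ((u : Set S).toFinite).image _
      have hTsub : T ⊆ S := convexHull_min (by rintro p ⟨i, _, rfl⟩; exact i.2) hSconv
      have h0T : (0 : Euc d) ∉ T := fun h => h0S (hTsub h)
      obtain ⟨f, r, hfr, hfb⟩ := geometric_hahn_banach_point_closed (E := Euc d) (convex_convexHull ℝ P)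
        (hPfin.isCompact_convexHull (𝕜 := ℝ)).isClosed h0T
      have hf0 : f 0 = 0 := map_zero f
      have hr : 0 < r := by rw [hf0] at hfr; exact hfr
      set c₀ : Euc d := (InnerProductSpace.toDual ℝ (Euc d)).symm f with hc₀
      have hc₀app : ∀ v : Euc d, ⟪c₀, v⟫ = f v := fun v => InnerProductSpace.toDual_symm_apply
      have hc₀ne : c₀ ≠ 0 := by
        intro h
        have hi₀T : (i₀ : Euc d) ∈ T := subset_convexHull ℝ P ⟨i₀, hi₀, rfl⟩
        have := hfb _ hi₀T
        rw [← hc₀app, h, inner_zero_left] at this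
        linarith
      refine ⟨‖c₀‖⁻¹ • c₀, ?_, ?_⟩
      · simp only [mem_sphere_iff_norm, sub_zero, norm_smul, norm_inv, norm_norm]
        exact inv_mul_cancel₀ (norm_ne_zero_iff.mpr hc₀ne)
      · simp only [Set.mem_iInter]
        intro i hi
        have hiT : (i : Euc d) ∈ T := subset_convexHull ℝ P ⟨i, hi, rfl⟩
        have hfi : 0 < f i := lt_trans hr (hfb _ hiT)
        simp only [hZ, Set.mem_setOf_eq, real_inner_smul_left, hc₀app]
        positivity
  obtain ⟨c, hcs, hcz⟩ := hsph.inter_iInter_nonempty Z hZc hfin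
  refine ⟨c, ?_, ?_⟩
  · intro h
    rw [h] at hcs
    simp at hcs
  · intro x hx y hy
    have hu : y - x ∈ S := Set.sub_mem_sub hy hx
    have := Set.mem_iInter.mp hcz ⟨y - x, hu⟩
    simp only [hZ, Set.mem_setOf_eq, inner_sub_right] at this
    linarith

lemma nonsep_aux (d : ℕ) : ∀ (s : ℕ) (a : Euc d) (K : Fin s → Set (Euc d)),
    (∀ i, IsConvexCone a (K i)) → ¬ SeparableFam a K →
    (⋂ i, intrinsicInterior ℝ (K i)).Nonempty := by
  intro s
  induction s with
  | zero =>
    intro a K _ _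
    exact ⟨0, Set.mem_iInter.2 (fun i => i.elim0)⟩
  | succ s ih =>
    intro a K hK hns
    set K' : Fin s → Set (Euc d) := fun j => K j.succ with hK'def
    have hK' : ∀ j, IsConvexCone a (K' j) := fun j => hK j.succ
    set D : Set (Euc d) := ⋂ j, intrinsicInterior ℝ (K' j) with hD
    rcases D.eq_empty_or_nonempty with hDe | hDne
    · -- subfamily is separable, hence the whole family is
      have hsep' : SeparableFam a K' := by
        by_contra h
        have := ih a K' hK' h
        rw [← hD, hDe] at this
        exact Set.not_nonempty_empty this
      obtain ⟨i, c, hc, h1, h2⟩ := hsep'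
      exact absurd ⟨i.succ, c, hc, h1, fun x hx =>
        h2 x (fun j hj => hx j.succ (fun hEq => hj (Fin.succ_injective _ hEq)))⟩ hns
    · set C : Set (Euc d) := intrinsicInterior ℝ (K 0) with hC
      have hCne : C.Nonempty :=
        Set.Nonempty.intrinsicInterior (hK 0).2.2 ⟨a, (hK 0).1⟩
      rcases (C ∩ D).eq_empty_or_nonempty with hCD | ⟨x, hxC, hxD⟩
      · -- separate C and D, contradicting non-separability
        have hdisj : ∀ x, x ∈ C → x ∉ D := by
          intro x hx hxD
          rw [Set.eq_empty_iff_forall_notMem] at hCD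
          exact hCD x ⟨hx, hxD⟩
        have hconvC : Convex ℝ C := convex_intrinsicInterior' (hK 0).2.2
        have hconvD : Convex ℝ D :=
          convex_iInter (fun j => convex_intrinsicInterior' (hK' j).2.2)
        obtain ⟨c, hc0, hsep⟩ := separate_disjoint_convex hconvC hconvD hCne hDne hdisj
        obtain ⟨z, hz⟩ := hCne
        obtain ⟨z', hz'⟩ := hDne
        have haC : a ∈ closure C := mem_closure_of_segment (z := z) (fun t ht =>
          combo_mem_intrinsicInterior (hK 0).2.2 hz (hK 0).1 ht.1 ht.2)
        have haD : a ∈ closure D := mem_closure_of_segment (z := z') (fun t ht =>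
          Set.mem_iInter.2 (fun j => combo_mem_intrinsicInterior (hK' j).2.2
            (Set.mem_iInter.mp hz' j) (hK' j).1 ht.1 ht.2))
        have hCa : ∀ x ∈ C, ⟪c, x⟫ ≤ ⟪c, a⟫ := by
          intro x hx
          have hclosed : IsClosed {y : Euc d | ⟪c, x⟫ ≤ ⟪c, y⟫} :=
            isClosed_le continuous_const (continuous_const.inner continuous_id)
          exact closure_minimal (fun y hy => hsep x hx y hy) hclosed haD
        have haD' : ∀ y ∈ D, ⟪c, a⟫ ≤ ⟪c, y⟫ := by
          intro y hy
          have hclosed : IsClosed {x : Euc d | ⟪c, x⟫ ≤ ⟪c, y⟫} :=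
            isClosed_le (continuous_const.inner continuous_id) continuous_const
          exact closure_minimal (fun x hx => hsep x hx y hy) hclosed haC
        have h1 : ∀ x ∈ K 0, ⟪c, x - a⟫ ≤ 0 := by
          intro x hx
          have hxcl : x ∈ closure C := mem_closure_of_segment (z := z) (fun t ht =>
            combo_mem_intrinsicInterior (hK 0).2.2 hz hx ht.1 ht.2)
          have hclosed : IsClosed {y : Euc d | ⟪c, y⟫ ≤ ⟪c, a⟫} :=
            isClosed_le (continuous_const.inner continuous_id) continuous_const
          have hle : ⟪c, x⟫ ≤ ⟪c, a⟫ :=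
            closure_minimal (fun y hy => hCa y hy) hclosed hxcl
          rw [inner_sub_right]; linarith
        have h2 : ∀ x : Euc d, (∀ j : Fin s, x ∈ K' j) → 0 ≤ ⟪c, x - a⟫ := by
          intro x hx
          have hxcl : x ∈ closure D := mem_closure_of_segment (z := z') (fun t ht =>
            Set.mem_iInter.2 (fun j => combo_mem_intrinsicInterior (hK' j).2.2
              (Set.mem_iInter.mp hz' j) (hx j) ht.1 ht.2))
          have hclosed : IsClosed {y : Euc d | ⟪c, a⟫ ≤ ⟪c, y⟫} :=
            isClosed_le continuous_const (continuous_const.inner continuous_id)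
          have hle : ⟪c, a⟫ ≤ ⟪c, x⟫ :=
            closure_minimal (fun y hy => haD' y hy) hclosed hxcl
          rw [inner_sub_right]; linarith
        exact absurd ⟨0, c, hc0, h1, fun x hx =>
          h2 x (fun j => hx j.succ (Fin.succ_ne_zero j))⟩ hns
      · exact ⟨x, Set.mem_iInter.2 (fun i => by
          refine Fin.cases ?_ ?_ i
          · exact hxC
          · exact fun j => Set.mem_iInter.mp hxD j)⟩

end Aux

/-- If a family of convex cones with a common vertex is not separable, then
their relative interiors have a common point. -/
theorem stmt11 (d s : ℕ) (hs : 0 < s) (a : Euc d) (K : Fin s → Set (Euc d))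
    (hK : ∀ i, IsConvexCone a (K i)) (hns : ¬ SeparableFam a K) :
    (⋂ i, intrinsicInterior ℝ (K i)).Nonempty :=
  nonsep_aux d s a K hK hns
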